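/- Every 3-connected simple graph on exactly 5 vertices is isomorphic to K₅, to K₅^− (the complete graph on 5 vertices with one edge deleted), or to the wheel W₅. -/

import Mathlib

open SimpleGraph

variable {V : Type*}

/-- A graph is `k`-connected: it has at least `k+1` vertices, and removing any set of
fewer than `k` vertices leaves a connected graph. -/
def KConnected (k : ℕ) (G : SimpleGraph V) : Prop :=
  k + 1 ≤ Nat.card V ∧ ∀ S : Set V, S.ncard < k → (G.induce Sᶜ).Connected

/-- Contraction of the non-edge `{u, v}`: `u` and `v` are replaced by a single
vertex (represented here by `u`), adjacent to every vertex that was adjacent to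
`u` or to `v`. -/
def contractNonEdge (G : SimpleGraph V) (u v : V) : SimpleGraph {w : V // w ≠ v} where
  Adj a b := a ≠ b ∧ (G.Adj a.1 b.1 ∨ (a.1 = u ∧ G.Adj v b.1) ∨ (b.1 = u ∧ G.Adj a.1 v))
  symm := by
    constructor
    rintro a b ⟨hab, h | ⟨h1, h2⟩ | ⟨h1, h2⟩⟩
    · exact ⟨hab.symm, Or.inl h.symm⟩
    · exact ⟨hab.symm, Or.inr (Or.inr ⟨h1, h2.symm⟩)⟩
    · exact ⟨hab.symm, Or.inr (Or.inl ⟨h1, h2.symm⟩)⟩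
  loopless := ⟨fun a h => h.1 rfl⟩

/-- `{u, v}` is a contractible non-edge of `G`: a non-edge whose contraction yields
a `3`-connected graph. -/
def IsContractibleNonEdge (G : SimpleGraph V) (u v : V) : Prop :=
  u ≠ v ∧ ¬ G.Adj u v ∧ KConnected 3 (contractNonEdge G u v)

/-- The set of contractible non-edges of `G`, as unordered pairs of vertices. -/
def contractibleNonEdges (G : SimpleGraph V) : Set (Sym2 V) :=
  {p | ∃ u v : V, p = s(u, v) ∧ IsContractibleNonEdge G u v}

/-- `S` is a cut of `G`: deleting the vertices of `S` leaves a disconnected graph. -/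
def IsCutSet (G : SimpleGraph V) (S : Set V) : Prop :=
  ¬ (G.induce Sᶜ).Preconnected

/-- `C` is the vertex set of a (connected) component of `G − S`. -/
def IsCompOf (G : SimpleGraph V) (S : Set V) (C : Set V) : Prop :=
  C.Nonempty ∧ C ⊆ Sᶜ ∧ (G.induce C).Connected ∧
    ∀ x ∈ C, ∀ y, y ∉ S → G.Adj x y → y ∈ C

/-- `K_n^−`: the complete graph on `n` vertices with the edge `{0, 1}` deleted. -/
def Kminus (n : ℕ) : SimpleGraph (Fin n) :=
  SimpleGraph.fromRel fun a b => ¬ (a.1 = 0 ∧ b.1 = 1) ∧ ¬ (a.1 = 1 ∧ b.1 = 0)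

/-- The wheel `W n` of order `n`: the cycle `1 - 2 - ⋯ - (n-1) - 1` of order `n-1`,
together with a hub `0` adjacent to all vertices of the cycle. -/
def wheel (n : ℕ) : SimpleGraph (Fin n) :=
  SimpleGraph.fromRel fun a b =>
    (a.1 = 0 ∧ b.1 ≠ 0) ∨ (a.1 + 1 = b.1 ∧ 1 ≤ a.1) ∨ (a.1 = 1 ∧ b.1 = n - 1)

lemma kminus_adj' : ∀ a b : Fin 5, (Kminus 5).Adj a b ↔
    a ≠ b ∧ ¬((a = 0 ∧ b = 1) ∨ (a = 1 ∧ b = 0)) := by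
  simp only [Kminus, SimpleGraph.fromRel_adj]; decide

lemma wheel_adj' : ∀ a b : Fin 5, (wheel 5).Adj a b ↔
    a ≠ b ∧ ¬((a = 1 ∧ b = 3) ∨ (a = 3 ∧ b = 1) ∨ (a = 2 ∧ b = 4) ∨ (a = 4 ∧ b = 2)) := by
  simp only [wheel, SimpleGraph.fromRel_adj]; decide

/-- Every 3-connected graph on exactly 5 vertices is isomorphic to `K₅`, to `K₅^−`,
or to the wheel `W₅`. -/
theorem stmt17 {V : Type*} [Fintype V] (G : SimpleGraph V)
    (h5 : Fintype.card V = 5) (hG : KConnected 3 G) :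
    Nonempty (G ≃g (⊤ : SimpleGraph (Fin 5))) ∨ Nonempty (G ≃g Kminus 5) ∨
      Nonempty (G ≃g wheel 5) := by
  classical
  have hcard : Nat.card V = 5 := by rw [Nat.card_eq_fintype_card, h5]
  -- every vertex has at most one non-neighbor
  have key2 : ∀ v b c : V, v ≠ b → v ≠ c → ¬ G.Adj v b → ¬ G.Adj v c → b = c := by
    intro v b c hvb hvc hnb hnc
    by_contra hbc
    have h3 : ({v, b, c} : Set V).ncard = 3 := by
      rw [Set.ncard_insert_of_notMem (by simp [hvb, hvc]), Set.ncard_pair hbc]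
    have hle : ({v, b, c} : Set V)ᶜ.ncard < 3 := by
      have := Set.ncard_add_ncard_compl ({v, b, c} : Set V)
      omega
    have hconn := hG.2 _ hle
    rw [compl_compl] at hconn
    have hv : v ∈ ({v, b, c} : Set V) := by simp
    have hb : b ∈ ({v, b, c} : Set V) := by simp
    obtain ⟨p⟩ := hconn.preconnected ⟨v, hv⟩ ⟨b, hb⟩
    have hne : (⟨v, hv⟩ : ({v, b, c} : Set V)) ≠ ⟨b, hb⟩ := by
      simp [Subtype.ext_iff, hvb]
    have hnil : ¬ p.Nil := SimpleGraph.Walk.not_nil_of_ne hne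
    have hadj := p.adj_snd hnil
    set x := p.getVert 1 with hx
    have hGadj : G.Adj v x.1 := hadj
    have hmem := x.2
    simp only [Set.mem_insert_iff, Set.mem_singleton_iff] at hmem
    rcases hmem with h | h | h
    · rw [h] at hGadj; exact G.irrefl hGadj
    · rw [h] at hGadj; exact hnb hGadj
    · rw [h] at hGadj; exact hnc hGadj
  by_cases hcomplete : ∀ a b : V, a ≠ b → G.Adj a b
  · left
    refine ⟨⟨Fintype.equivFinOfCardEq h5, ?_⟩⟩
    intro a b
    simp only [top_adj, ne_eq, EmbeddingLike.apply_eq_iff_eq]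
    constructor
    · intro hab; exact hcomplete a b hab
    · intro hab; exact G.ne_of_adj hab
  push_neg at hcomplete
  obtain ⟨x, y, hxy, hnxy⟩ := hcomplete
  have hnyx : ¬ G.Adj y x := fun h => hnxy h.symm
  by_cases hsec : ∃ z w : V, z ≠ w ∧ ¬ G.Adj z w ∧ ¬(z = x ∧ w = y) ∧ ¬(z = y ∧ w = x)
  · -- wheel case
    right; right
    obtain ⟨z, w, hzw, hnzw, hp1, hp2⟩ := hsec
    have hnwz : ¬ G.Adj w z := fun h => hnzw h.symm
    have hzx : z ≠ x := by
      intro h; subst h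
      exact hp1 ⟨rfl, key2 z w y hzw hxy hnzw hnxy⟩
    have hzy : z ≠ y := by
      intro h; subst h
      exact hp2 ⟨rfl, key2 z w x hzw (Ne.symm hxy) hnzw hnyx⟩
    have hwx : w ≠ x := by
      intro h; subst h
      exact hp2 ⟨key2 w z y hzw.symm hxy hnwz hnxy ▸ rfl, rfl⟩
    have hwy : w ≠ y := by
      intro h; subst h
      exact hp1 ⟨key2 w z x hzw.symm (Ne.symm hxy) hnwz hnyx ▸ rfl, rfl⟩
    -- fifth vertex
    have hex : ∃ u : V, u ≠ x ∧ u ≠ y ∧ u ≠ z ∧ u ≠ w := by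
      by_contra hc
      push_neg at hc
      have hsub : (Finset.univ : Finset V) ⊆ {x, y, z, w} := by
        intro u _
        by_cases h1 : u = x; · simp [h1]
        by_cases h2 : u = y; · simp [h2]
        by_cases h3 : u = z; · simp [h3]
        have := hc u h1 h2 h3
        simp [this]
      have := Finset.card_le_card hsub
      have h4 : ({x, y, z, w} : Finset V).card ≤ 4 := by
        apply le_trans (Finset.card_insert_le _ _)
        apply Nat.succ_le_succ
        apply le_trans (Finset.card_insert_le _ _)
        apply Nat.succ_le_succ
        apply le_trans (Finset.card_insert_le _ _)
        simp
      rw [Finset.card_univ, h5] at this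
      omega
    obtain ⟨u, hux, huy, huz, huw⟩ := hex
    -- every vertex is one of the five
    have huniv : ∀ a : V, a = u ∨ a = x ∨ a = y ∨ a = z ∨ a = w := by
      have hcardset : ({u, x, y, z, w} : Finset V).card = 5 := by
        rw [Finset.card_insert_of_notMem (by simp [hux, huy, huz, huw]),
          Finset.card_insert_of_notMem (by simp [hxy, Ne.symm hzx, Ne.symm hwx]),
          Finset.card_insert_of_notMem (by simp [Ne.symm hzy, Ne.symm hwy]),
          Finset.card_insert_of_notMem (by simp [hzw]), Finset.card_singleton]
      have huniveq := Finset.eq_univ_of_card _ (hcardset.trans h5.symm)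
      intro a
      have : a ∈ ({u, x, y, z, w} : Finset V) := huniveq ▸ Finset.mem_univ a
      simpa using this
    -- classification of non-edges
    have hclass : ∀ a b : V, a ≠ b → ¬ G.Adj a b →
        (a = x ∧ b = y) ∨ (a = y ∧ b = x) ∨ (a = z ∧ b = w) ∨ (a = w ∧ b = z) := by
      intro a b hab hnab
      have hnba : ¬ G.Adj b a := fun h => hnab h.symm
      rcases huniv a with ha | ha | ha | ha | ha
      · -- a = u : impossible
        exfalso
        have hnba' : ¬ G.Adj b u := ha ▸ hnba
        rcases huniv b with hb | hb | hb | hb | hb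
        · exact hab (ha.trans hb.symm)
        · exact huy (key2 x u y (Ne.symm hux) hxy (hb ▸ hnba') hnxy)
        · exact hux (key2 y u x (Ne.symm huy) (Ne.symm hxy) (hb ▸ hnba') hnyx)
        · exact huw (key2 z u w (Ne.symm huz) hzw (hb ▸ hnba') hnzw)
        · exact huz (key2 w u z (Ne.symm huw) hzw.symm (hb ▸ hnba') hnwz)
      · exact Or.inl ⟨ha, key2 x b y (ha ▸ hab) hxy (ha ▸ hnab) hnxy⟩
      · exact Or.inr (Or.inl ⟨ha, key2 y b x (ha ▸ hab) (Ne.symm hxy) (ha ▸ hnab) hnyx⟩)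
      · exact Or.inr (Or.inr (Or.inl ⟨ha, key2 z b w (ha ▸ hab) hzw (ha ▸ hnab) hnzw⟩))
      · exact Or.inr (Or.inr (Or.inr ⟨ha, key2 w b z (ha ▸ hab) hzw.symm (ha ▸ hnab) hnwz⟩))
    -- build the equivalence
    let e0 : V ≃ Fin 5 := Fintype.equivFinOfCardEq h5
    let e1 := e0.trans (Equiv.swap (e0 u) 0)
    have h1u : e1 u = 0 := by simp [e1, Equiv.swap_apply_left]
    let e2 := e1.trans (Equiv.swap (e1 x) 1)
    have h2x : e2 x = 1 := by simp [e2, Equiv.swap_apply_left]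
    have h2u : e2 u = 0 := by
      simp only [e2, Equiv.trans_apply, h1u]
      rw [Equiv.swap_apply_of_ne_of_ne]
      · rw [← h1u]; exact e1.injective.ne hux
      · decide
    let e3 := e2.trans (Equiv.swap (e2 z) 2)
    have h3z : e3 z = 2 := by simp [e3, Equiv.swap_apply_left]
    have h3u : e3 u = 0 := by
      simp only [e3, Equiv.trans_apply, h2u]
      rw [Equiv.swap_apply_of_ne_of_ne]
      · rw [← h2u]; exact e2.injective.ne huz
      · decide
    have h3x : e3 x = 1 := by
      simp only [e3, Equiv.trans_apply, h2x]
      rw [Equiv.swap_apply_of_ne_of_ne]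
      · rw [← h2x]; exact e2.injective.ne (Ne.symm hzx)
      · decide
    let e4 := e3.trans (Equiv.swap (e3 y) 3)
    have h4y : e4 y = 3 := by simp [e4, Equiv.swap_apply_left]
    have h4u : e4 u = 0 := by
      simp only [e4, Equiv.trans_apply, h3u]
      rw [Equiv.swap_apply_of_ne_of_ne]
      · rw [← h3u]; exact e3.injective.ne huy
      · decide
    have h4x : e4 x = 1 := by
      simp only [e4, Equiv.trans_apply, h3x]
      rw [Equiv.swap_apply_of_ne_of_ne]
      · rw [← h3x]; exact e3.injective.ne hxy
      · decide
    have h4z : e4 z = 2 := by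
      simp only [e4, Equiv.trans_apply, h3z]
      rw [Equiv.swap_apply_of_ne_of_ne]
      · rw [← h3z]; exact e3.injective.ne hzy
      · decide
    have h4w : e4 w = 4 := by
      have h0 : e4 w ≠ 0 := by rw [← h4u]; exact e4.injective.ne (Ne.symm huw)
      have h1 : e4 w ≠ 1 := by rw [← h4x]; exact e4.injective.ne hwx
      have h2 : e4 w ≠ 2 := by rw [← h4z]; exact e4.injective.ne hzw.symm
      have h3 : e4 w ≠ 3 := by rw [← h4y]; exact e4.injective.ne hwy
      omega
    refine ⟨⟨e4, ?_⟩⟩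
    intro a b
    rw [wheel_adj']
    constructor
    · rintro ⟨hne, hpat⟩
      have hab : a ≠ b := fun h => hne (by rw [h])
      by_contra hn
      rcases hclass a b hab hn with ⟨rfl, rfl⟩ | ⟨rfl, rfl⟩ | ⟨rfl, rfl⟩ | ⟨rfl, rfl⟩
      · exact hpat (Or.inl ⟨h4x, h4y⟩)
      · exact hpat (Or.inr (Or.inl ⟨h4y, h4x⟩))
      · exact hpat (Or.inr (Or.inr (Or.inl ⟨h4z, h4w⟩)))
      · exact hpat (Or.inr (Or.inr (Or.inr ⟨h4w, h4z⟩)))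
    · intro hab
      refine ⟨e4.injective.ne (G.ne_of_adj hab), ?_⟩
      rintro (⟨ha, hb⟩ | ⟨ha, hb⟩ | ⟨ha, hb⟩ | ⟨ha, hb⟩)
      · exact hnxy (e4.injective (ha.trans h4x.symm) ▸ e4.injective (hb.trans h4y.symm) ▸ hab)
      · exact hnyx (e4.injective (ha.trans h4y.symm) ▸ e4.injective (hb.trans h4x.symm) ▸ hab)
      · exact hnzw (e4.injective (ha.trans h4z.symm) ▸ e4.injective (hb.trans h4w.symm) ▸ hab)
      · exact hnwz (e4.injective (ha.trans h4w.symm) ▸ e4.injective (hb.trans h4z.symm) ▸ hab)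
  · -- Kminus case
    right; left
    have hclass : ∀ a b : V, a ≠ b → ¬ G.Adj a b → (a = x ∧ b = y) ∨ (a = y ∧ b = x) := by
      intro a b hab hnab
      by_contra hc
      push_neg at hc
      exact hsec ⟨a, b, hab, hnab, fun h => hc.1 h.1 h.2, fun h => hc.2 h.1 h.2⟩
    let e0 : V ≃ Fin 5 := Fintype.equivFinOfCardEq h5
    let e1 := e0.trans (Equiv.swap (e0 x) 0)
    have h1x : e1 x = 0 := by simp [e1, Equiv.swap_apply_left]
    let e2 := e1.trans (Equiv.swap (e1 y) 1)
    have h2y : e2 y = 1 := by simp [e2, Equiv.swap_apply_left]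
    have h2x : e2 x = 0 := by
      simp only [e2, Equiv.trans_apply, h1x]
      rw [Equiv.swap_apply_of_ne_of_ne]
      · rw [← h1x]; exact e1.injective.ne hxy
      · decide
    refine ⟨⟨e2, ?_⟩⟩
    intro a b
    rw [kminus_adj']
    constructor
    · rintro ⟨hne, hpat⟩
      have hab : a ≠ b := fun h => hne (by rw [h])
      by_contra hn
      rcases hclass a b hab hn with ⟨rfl, rfl⟩ | ⟨rfl, rfl⟩
      · exact hpat (Or.inl ⟨h2x, h2y⟩)
      · exact hpat (Or.inr ⟨h2y, h2x⟩)
    · intro hab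
      refine ⟨e2.injective.ne (G.ne_of_adj hab), ?_⟩
      rintro (⟨ha, hb⟩ | ⟨ha, hb⟩)
      · exact hnxy (e2.injective (ha.trans h2x.symm) ▸ e2.injective (hb.trans h2y.symm) ▸ hab)
      · exact hnyx (e2.injective (ha.trans h2y.symm) ▸ e2.injective (hb.trans h2x.symm) ▸ hab)
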